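/- Let r, p, n, k be positive integers with p dividing r. Then the set {φ_k(x_d) : d ∈ Π_k(r,p,n)} is a ℂ-basis of the centralizer algebra End_{G(r,p,n)}(V^{⊗k}) = {F ∈ End(V^{⊗k}) : F ∘ g^{⊗k} = g^{⊗k} ∘ F for all g ∈ G(r,p,n)}. -/

import Mathlib

open scoped Classical
open Matrix

noncomputable section

namespace Tanabe

/-! ## Tensor space model of `V^{⊗k}` for `V = ℂ^n`.
A tensor is encoded by its coordinates, i.e. a function `(Fin k → Fin n) → ℂ`;
the basis vector `v_{i_1} ⊗ ⋯ ⊗ v_{i_k}` corresponds to the indicator function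
of the tuple `(i_1, …, i_k)`. -/

abbrev TP (n k : ℕ) : Type := (Fin k → Fin n) → ℂ

/-- The linear endomorphism of `V^{⊗k}` with matrix `K` in the standard basis:
it sends the basis vector indexed by the tuple `i` to `∑ₒ K o i • (basis vector o)`. -/
def kernelMap (n k : ℕ) (K : (Fin k → Fin n) → (Fin k → Fin n) → ℂ) :
    TP n k →ₗ[ℂ] TP n k where
  toFun f := fun o => ∑ i : Fin k → Fin n, K o i * f i
  map_add' f g := by
    funext o
    simp only [Pi.add_apply, mul_add]
    exact Finset.sum_add_distrib
  map_smul' c f := by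
    funext o
    simp only [Pi.smul_apply, smul_eq_mul, RingHom.id_apply]
    rw [Finset.mul_sum]
    exact Finset.sum_congr rfl fun i _ => by ring

/-- The diagonal (tensor-power) action `g^{⊗k}` of a matrix `g` on `V^{⊗k}`. -/
def tensorPow (n k : ℕ) (g : Matrix (Fin n) (Fin n) ℂ) : TP n k →ₗ[ℂ] TP n k :=
  kernelMap n k fun o i => ∏ t : Fin k, g (o t) (i t)

/-! ## Set partitions of `{1,…,t,1′,…,t′}`.
A set partition of `{1,…,t,1′,…,t′}` is encoded as a `Setoid` on `Fin t ⊕ Fin t`,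
with `Sum.inl` the unprimed (top row) elements and `Sum.inr` the primed (bottom row)
elements; blocks are the equivalence classes. -/

abbrev SP (t : ℕ) : Type := Setoid (Fin t ⊕ Fin t)

/-- `N(B)`: number of top-row (unprimed) elements in the block `q` of `d`. -/
def topCt {t : ℕ} (d : SP t) (q : Quotient d) : ℕ :=
  Nat.card {a : Fin t // Quotient.mk d (Sum.inl a) = q}

/-- `M(B)`: number of bottom-row (primed) elements in the block `q` of `d`. -/
def botCt {t : ℕ} (d : SP t) (q : Quotient d) : ℕ :=
  Nat.card {a : Fin t // Quotient.mk d (Sum.inr a) = q}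

/-- `|d|`: the number of blocks of `d`. -/
def nBlocks {t : ℕ} (d : SP t) : ℕ := Nat.card (Quotient d)

/-- Coefficient of `φ_t(x_d)`: equals `1` if the equalities among the values of the
combined tuple `c` are *exactly* those prescribed by `d`, and `0` otherwise. -/
def coeX (n t : ℕ) (d : SP t) (c : Fin t ⊕ Fin t → Fin n) : ℂ :=
  if ∀ a b : Fin t ⊕ Fin t, d.r a b ↔ c a = c b then 1 else 0

/-- Coefficient of `φ_t(d)` (the diagram basis): equals `1` if the values of the
combined tuple `c` agree on each block of `d`, and `0` otherwise. -/
def coeD (n t : ℕ) (d : SP t) (c : Fin t ⊕ Fin t → Fin n) : ℂ :=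
  if ∀ a b : Fin t ⊕ Fin t, d.r a b → c a = c b then 1 else 0

/-- The operator `φ_t(x_d)` on `V^{⊗t}`. -/
def phiX (n t : ℕ) (d : SP t) : TP n t →ₗ[ℂ] TP n t :=
  kernelMap n t fun o i => coeX n t d (Sum.elim i o)

/-- The operator `φ_t(d)` on `V^{⊗t}` (diagram basis). -/
def phiD (n t : ℕ) (d : SP t) : TP n t →ₗ[ℂ] TP n t :=
  kernelMap n t fun o i => coeD n t d (Sum.elim i o)

/-- `d ∈ Π_t(r)` : every block `B` satisfies `N(B) ≡ M(B) (mod r)`. -/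
def inPi (r : ℕ) {t : ℕ} (d : SP t) : Prop :=
  ∀ q : Quotient d, (topCt d q : ℤ) ≡ (botCt d q : ℤ) [ZMOD (r : ℤ)]

/-- `d ∈ Λ_t(r,p,n)` (here `m = r/p`). -/
def inLambda (r p n : ℕ) {t : ℕ} (d : SP t) : Prop :=
  nBlocks d = n ∧
  (∀ q : Quotient d,
    ((topCt d q : ℤ) ≡ (botCt d q : ℤ) [ZMOD ((r / p : ℕ) : ℤ)]) ∧
    ¬ ((topCt d q : ℤ) ≡ (botCt d q : ℤ) [ZMOD (r : ℤ)])) ∧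
  (∀ q q' : Quotient d,
    (topCt d q : ℤ) - (botCt d q : ℤ) ≡ (topCt d q' : ℤ) - (botCt d q' : ℤ) [ZMOD (r : ℤ)])

/-- `d ∈ Θ_t(r,p,n)` (here `m = r/p`). -/
def inTheta (r p n : ℕ) {t : ℕ} (d : SP t) : Prop :=
  n < nBlocks d ∧
  (∀ q : Quotient d, (topCt d q : ℤ) ≡ (botCt d q : ℤ) [ZMOD ((r / p : ℕ) : ℤ)]) ∧
  ∃ q : Quotient d, ¬ ((topCt d q : ℤ) ≡ (botCt d q : ℤ) [ZMOD (r : ℤ)])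

/-- `d ∈ A_t(r,p,n) = Π_t(r) ∪ Λ_t(r,p,n) ∪ Θ_t(r,p,n)`. -/
def inA (r p n : ℕ) {t : ℕ} (d : SP t) : Prop :=
  inPi r d ∨ inLambda r p n d ∨ inTheta r p n d

/-- `d ∈ A_{k+1/2}` : `k+1` and `(k+1)′` lie in the same block. -/
def isHalf (k : ℕ) (d : SP (k + 1)) : Prop :=
  d.r (Sum.inl (Fin.last k)) (Sum.inr (Fin.last k))

/-- `d ∈ Π_t(r,p,n)` : `d ∈ A_t(r,p,n)` with at most `n` blocks. -/
def inPiRPN (r p n : ℕ) {t : ℕ} (d : SP t) : Prop :=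
  inA r p n d ∧ nBlocks d ≤ n

/-- `{φ_k(x_d) : d ∈ A_k(r,p,n)}`. -/
def TanSet (r p n k : ℕ) : Set (TP n k →ₗ[ℂ] TP n k) :=
  {T | ∃ d : SP k, inA r p n d ∧ T = phiX n k d}

/-- `{φ_{k+1}(x_d) : d ∈ A_{k+1/2}(r,p,n)}` (as endomorphisms of `V^{⊗(k+1)}`). -/
def TanSetHalf (r p n k : ℕ) : Set (TP n (k + 1) →ₗ[ℂ] TP n (k + 1)) :=
  {T | ∃ d : SP (k + 1), (inA r p n d ∧ isHalf k d) ∧ T = phiX n (k + 1) d}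

/-! ## The groups `G(r,p,n)` and `L(r,p,n)` as matrix groups. -/

/-- The monomial matrix with underlying permutation `π` and weights `a` :
its `(i,j)` entry is `a j` if `i = π j` and `0` otherwise, so that it maps
`v_j ↦ a j • v_{π j}`. -/
def monoMat (n : ℕ) (π : Equiv.Perm (Fin n)) (a : Fin n → ℂ) :
    Matrix (Fin n) (Fin n) ℂ :=
  Matrix.of fun i j => if i = π j then a j else 0

/-- `G(r,p,n)` as a set of matrices: matrices with exactly one nonzero entry in each
row and column, whose nonzero entries are `r`-th roots of unity, and such that the
`m = r/p`-th power of the product of the nonzero entries is `1`. -/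
def GSet (r p n : ℕ) : Set (Matrix (Fin n) (Fin n) ℂ) :=
  {g | ∃ (π : Equiv.Perm (Fin n)) (a : Fin n → ℂ),
    (∀ i, a i ^ r = 1) ∧ (∏ i, a i) ^ (r / p) = 1 ∧ g = monoMat n π a}

/-- The last index of `Fin n` (position `n` in 1-indexed notation). -/
def lastIdx (n : ℕ) (hn : 0 < n) : Fin n := ⟨n - 1, by omega⟩

/-- `L(r,p,n)` as a set of matrices: elements of `G(r,p,n)` whose `(n,n)` entry
is nonzero. -/
def LSet (r p n : ℕ) (hn : 0 < n) : Set (Matrix (Fin n) (Fin n) ℂ) :=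
  {g | g ∈ GSet r p n ∧ g (lastIdx n hn) (lastIdx n hn) ≠ 0}

/-- The centralizer algebra `End_{G(r,p,n)}(V^{⊗k})`. -/
def centG (r p n k : ℕ) : Set (TP n k →ₗ[ℂ] TP n k) :=
  {F | ∀ g ∈ GSet r p n, F ∘ₗ tensorPow n k g = tensorPow n k g ∘ₗ F}

/-- The subspace `W = V^{⊗k} ⊗ ℂ v_n` of `V^{⊗(k+1)}` : coordinate functions
supported on tuples whose last entry is the last index. -/
def Wsub (n k : ℕ) (hn : 0 < n) : Submodule ℂ (TP n (k + 1)) where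
  carrier := {f | ∀ j : Fin (k + 1) → Fin n, j (Fin.last k) ≠ lastIdx n hn → f j = 0}
  add_mem' := by
    intro a b ha hb j hj
    simp [Pi.add_apply, ha j hj, hb j hj]
  zero_mem' := by intro j hj; rfl
  smul_mem' := by
    intro c a ha j hj
    simp [Pi.smul_apply, ha j hj]


/-! ## Group structure -/

abbrev GLn (n : ℕ) := Matrix.GeneralLinearGroup (Fin n) ℂ

lemma monoMat_mul (n : ℕ) (π σ : Equiv.Perm (Fin n)) (a b : Fin n → ℂ) :
    monoMat n π a * monoMat n σ b = monoMat n (π * σ) (fun j => a (σ j) * b j) := by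
  ext i j
  simp only [monoMat, Matrix.mul_apply, Matrix.of_apply, mul_ite, mul_zero, ite_mul, zero_mul]
  rw [Finset.sum_ite_eq' Finset.univ (σ j)]
  simp [Equiv.Perm.mul_apply]
  congr

lemma monoMat_one (n : ℕ) : monoMat n 1 (fun _ => (1 : ℂ)) = 1 := by
  ext i j
  simp [monoMat, Matrix.one_apply]
  congr

lemma one_mem_GSet (r p n : ℕ) : (1 : Matrix (Fin n) (Fin n) ℂ) ∈ GSet r p n :=
  ⟨1, fun _ => 1, fun _ => one_pow r, by simp, (monoMat_one n).symm⟩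

lemma mul_mem_GSet {r p n : ℕ} {g h : Matrix (Fin n) (Fin n) ℂ}
    (hg : g ∈ GSet r p n) (hh : h ∈ GSet r p n) : g * h ∈ GSet r p n := by
  obtain ⟨π, a, ha, hpa, rfl⟩ := hg
  obtain ⟨σ, b, hb, hpb, rfl⟩ := hh
  refine ⟨π * σ, fun j => a (σ j) * b j, fun i => by rw [mul_pow, ha, hb, one_mul], ?_,
    monoMat_mul n π σ a b⟩
  have h1 : (∏ i, (a (σ i) * b i)) = (∏ i, a i) * ∏ i, b i := by
    rw [Finset.prod_mul_distrib, Equiv.prod_comp σ a]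
  rw [h1, mul_pow, hpa, hpb, one_mul]

lemma a_ne_zero {r : ℕ} (hr : 0 < r) {a : ℂ} (ha : a ^ r = 1) : a ≠ 0 := by
  intro h0
  rw [h0, zero_pow hr.ne'] at ha
  exact zero_ne_one ha

lemma monoMat_mul_inv (n : ℕ) (π : Equiv.Perm (Fin n)) (a : Fin n → ℂ)
    (ha : ∀ i, a i ≠ 0) :
    monoMat n π a * monoMat n π⁻¹ (fun j => (a (π⁻¹ j))⁻¹) = 1 := by
  simp only [monoMat_mul]
  rw [mul_inv_cancel,
    show (fun j => a (π⁻¹ j) * (a (π⁻¹ j))⁻¹) = fun _ : Fin n => (1 : ℂ) from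
      funext fun j => mul_inv_cancel₀ (ha _),
    monoMat_one]

/-- The value of the inverse of a unit whose underlying matrix is a monomial matrix. -/
lemma gl_inv_val {n : ℕ} (g : GLn n) (π : Equiv.Perm (Fin n)) (a : Fin n → ℂ)
    (ha : ∀ i, a i ≠ 0) (hg : (↑g : Matrix (Fin n) (Fin n) ℂ) = monoMat n π a) :
    (↑g⁻¹ : Matrix (Fin n) (Fin n) ℂ) = monoMat n π⁻¹ (fun j => (a (π⁻¹ j))⁻¹) := by
  have hmul : (↑g : Matrix (Fin n) (Fin n) ℂ) *
      monoMat n π⁻¹ (fun j => (a (π⁻¹ j))⁻¹) = 1 := by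
    rw [hg]; exact monoMat_mul_inv n π a ha
  calc (↑g⁻¹ : Matrix (Fin n) (Fin n) ℂ)
      = ↑g⁻¹ * ((↑g : Matrix (Fin n) (Fin n) ℂ) *
          monoMat n π⁻¹ (fun j => (a (π⁻¹ j))⁻¹)) := by rw [hmul, mul_one]
    _ = ((↑g⁻¹ : Matrix (Fin n) (Fin n) ℂ) * ↑g) *
          monoMat n π⁻¹ (fun j => (a (π⁻¹ j))⁻¹) := by rw [mul_assoc]
    _ = monoMat n π⁻¹ (fun j => (a (π⁻¹ j))⁻¹) := by
          rw [← Units.val_mul, inv_mul_cancel, Units.val_one, one_mul]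

lemma inv_mem_GSet {r p n : ℕ} (hr : 0 < r) {g : GLn n}
    (hg : (↑g : Matrix (Fin n) (Fin n) ℂ) ∈ GSet r p n) :
    (↑g⁻¹ : Matrix (Fin n) (Fin n) ℂ) ∈ GSet r p n := by
  obtain ⟨π, a, ha, hpa, hgm⟩ := hg
  have hane : ∀ i, a i ≠ 0 := fun i => a_ne_zero hr (ha i)
  refine ⟨π⁻¹, fun j => (a (π⁻¹ j))⁻¹, fun i => by rw [inv_pow, ha, inv_one], ?_,
    gl_inv_val g π a hane hgm⟩
  rw [Finset.prod_inv_distrib, Equiv.prod_comp π⁻¹ a, inv_pow, hpa, inv_one]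

/-- The complex reflection group `G(r,p,n)` as a subgroup of `GL_n(ℂ)`. -/
def GGroup (r p n : ℕ) (hr : 0 < r) : Subgroup (GLn n) where
  carrier := {g | (↑g : Matrix (Fin n) (Fin n) ℂ) ∈ GSet r p n}
  one_mem' := by
    show (↑(1 : GLn n) : Matrix (Fin n) (Fin n) ℂ) ∈ GSet r p n
    rw [Units.val_one]; exact one_mem_GSet r p n
  mul_mem' := by
    intro g h hg hh
    show (↑(g * h) : Matrix (Fin n) (Fin n) ℂ) ∈ GSet r p n
    rw [Units.val_mul]; exact mul_mem_GSet hg hh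
  inv_mem' := by
    intro g hg
    exact inv_mem_GSet hr hg

lemma monoMat_last {n : ℕ} (hn : 0 < n) (π : Equiv.Perm (Fin n)) (a : Fin n → ℂ)
    (h : monoMat n π a (lastIdx n hn) (lastIdx n hn) ≠ 0) :
    π (lastIdx n hn) = lastIdx n hn ∧ a (lastIdx n hn) ≠ 0 := by
  by_cases hp : lastIdx n hn = π (lastIdx n hn)
  · refine ⟨hp.symm, ?_⟩
    intro h0
    apply h
    simp [monoMat, ← hp, h0]
  · exfalso; apply h; simp [monoMat, hp]

lemma monoMat_last_entry {n : ℕ} (hn : 0 < n) (π : Equiv.Perm (Fin n)) (a : Fin n → ℂ)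
    (hp : π (lastIdx n hn) = lastIdx n hn) :
    monoMat n π a (lastIdx n hn) (lastIdx n hn) = a (lastIdx n hn) := by
  simp [monoMat, hp]

/-- The subgroup `L(r,p,n)` of `G(r,p,n)` (matrices with nonzero `(n,n)` entry). -/
def LGroup (r p n : ℕ) (hr : 0 < r) (hn : 0 < n) : Subgroup (GLn n) where
  carrier := {g | (↑g : Matrix (Fin n) (Fin n) ℂ) ∈ LSet r p n hn}
  one_mem' := by
    refine ⟨?_, ?_⟩
    · show (↑(1 : GLn n) : Matrix (Fin n) (Fin n) ℂ) ∈ GSet r p n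
      rw [Units.val_one]; exact one_mem_GSet r p n
    · rw [Units.val_one]
      simp [Matrix.one_apply]
  mul_mem' := by
    rintro g h ⟨hg, hge⟩ ⟨hh, hhe⟩
    refine ⟨?_, ?_⟩
    · show (↑(g * h) : Matrix (Fin n) (Fin n) ℂ) ∈ GSet r p n
      rw [Units.val_mul]; exact mul_mem_GSet hg hh
    · obtain ⟨π, a, ha, hpa, hgm⟩ := hg
      obtain ⟨σ, b, hb, hpb, hhm⟩ := hh
      rw [hgm] at hge
      rw [hhm] at hhe
      obtain ⟨hπ, ha0⟩ := monoMat_last hn π a hge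
      obtain ⟨hσ, hb0⟩ := monoMat_last hn σ b hhe
      rw [Units.val_mul, hgm, hhm, monoMat_mul]
      rw [monoMat_last_entry hn _ _ (by simp [Equiv.Perm.mul_apply, hσ, hπ])]
      simp only [hσ]
      exact mul_ne_zero ha0 hb0
  inv_mem' := by
    rintro g ⟨hg, hge⟩
    obtain ⟨π, a, ha, hpa, hgm⟩ := hg
    have hane : ∀ i, a i ≠ 0 := fun i => a_ne_zero hr (ha i)
    rw [hgm] at hge
    obtain ⟨hπ, ha0⟩ := monoMat_last hn π a hge
    refine ⟨inv_mem_GSet hr ⟨π, a, ha, hpa, hgm⟩, ?_⟩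
    rw [gl_inv_val g π a hane hgm]
    have hπi : π⁻¹ (lastIdx n hn) = lastIdx n hn := by
      conv_lhs => rw [← hπ]
      simp
    rw [monoMat_last_entry hn _ _ hπi]
    simp only [hπi]
    exact inv_ne_zero ha0

lemma GGroup_le (r p n : ℕ) (hr : 0 < r) : GGroup r p n hr ≤ GGroup r 1 n hr := by
  rintro g ⟨π, a, ha, hpa, hgm⟩
  refine ⟨π, a, ha, ?_, hgm⟩
  rw [Nat.div_one, ← Finset.prod_pow]
  simp [ha]

lemma LGroup_le (r p n : ℕ) (hr : 0 < r) (hn : 0 < n) :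
    LGroup r p n hr hn ≤ LGroup r 1 n hr hn := by
  rintro g ⟨hg, hge⟩
  exact ⟨GGroup_le r p n hr hg, hge⟩

lemma LGroup_le_GGroup (r p n : ℕ) (hr : 0 < r) (hn : 0 < n) :
    LGroup r p n hr hn ≤ GGroup r p n hr := fun _ hg => hg.1

lemma LGroup_le_G1 (r p n : ℕ) (hr : 0 < r) (hn : 0 < n) :
    LGroup r p n hr hn ≤ GGroup r 1 n hr :=
  le_trans (LGroup_le_GGroup r p n hr hn) (GGroup_le r p n hr)

/-! ## Representation-theoretic notions -/

section Reps

variable {G : Type*} [Monoid G] {V : Type*} [AddCommGroup V] [Module ℂ V]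

/-- A submodule invariant under a representation. -/
def RepInvariant (ρ : Representation ℂ G V) (q : Submodule ℂ V) : Prop :=
  ∀ (g : G), ∀ v ∈ q, ρ g v ∈ q

/-- Irreducibility of a representation. -/
def RepIrreducible (ρ : Representation ℂ G V) : Prop :=
  Nontrivial V ∧ ∀ q : Submodule ℂ V, RepInvariant ρ q → q = ⊥ ∨ q = ⊤

/-- Irreducibility of an invariant subspace, as a subrepresentation. -/
def SubIrreducible (ρ : Representation ℂ G V) (q : Submodule ℂ V) : Prop :=
  q ≠ ⊥ ∧ ∀ q' : Submodule ℂ V, q' ≤ q → RepInvariant ρ q' → q' = ⊥ ∨ q' = q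

/-- Two (invariant) subspaces are isomorphic as subrepresentations: there is a
`ℂ`-linear equivalence between them intertwining the action. -/
def IsSubrepIso (ρ : Representation ℂ G V) (q q' : Submodule ℂ V) : Prop :=
  ∃ e : q ≃ₗ[ℂ] q', ∀ (g : G) (x : V) (hx : x ∈ q) (hgx : ρ g x ∈ q),
    ((e ⟨ρ g x, hgx⟩ : q') : V) = ρ g ((e ⟨x, hx⟩ : q') : V)

/-- A representation is multiplicity free: it is an (internal) direct sum of
pairwise non-isomorphic irreducible subrepresentations. -/
def RepMultFree (ρ : Representation ℂ G V) : Prop :=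
  ∃ (ι : Type) (_ : Fintype ι) (W : ι → Submodule ℂ V),
    (∀ i, RepInvariant ρ (W i)) ∧
    (∀ i, SubIrreducible ρ (W i)) ∧
    iSupIndep W ∧ (⨆ i, W i) = ⊤ ∧
    (∀ i j, i ≠ j → ¬ IsSubrepIso ρ (W i) (W j))

/-- Restriction of a representation of `K` to a subgroup `H ≤ K`. -/
def restrictRep {G : Type*} [Group G] {H K : Subgroup G} (h : H ≤ K)
    (ρ : Representation ℂ ↥K V) : Representation ℂ ↥H V :=
  MonoidHom.comp ρ (Subgroup.inclusion h)

end Reps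

/-! ## The elements `ζ_i^l ζ_j^{-l} s_{ij}` and the central elements `κ` -/

/-- `ζ = exp(2πi/r)`, a primitive `r`-th root of unity. -/
def zeta (r : ℕ) : ℂ := Complex.exp (2 * Real.pi * Complex.I / r)

lemma zeta_pow_self {r : ℕ} (hr : 0 < r) : zeta r ^ r = 1 := by
  rw [zeta, ← Complex.exp_nat_mul]
  rw [show (r : ℂ) * (2 * Real.pi * Complex.I / r) = 2 * Real.pi * Complex.I by
    rw [mul_div_assoc']
    exact mul_div_cancel_left₀ _ (Nat.cast_ne_zero.mpr hr.ne')]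
  exact Complex.exp_two_pi_mul_I

lemma zeta_ne_zero (r : ℕ) : zeta r ≠ 0 := Complex.exp_ne_zero _

/-- Weights of the monomial matrix `ζ_i^l ζ_j^{-l} s_{ij}` : `ζ^l` in position `i`,
`ζ^{-l}` in position `j`, `1` elsewhere. -/
def zijWt (r l : ℕ) {n : ℕ} (i j : Fin n) : Fin n → ℂ :=
  fun t => if t = i then zeta r ^ l else if t = j then (zeta r ^ l)⁻¹ else 1

/-- The matrix `ζ_i^l ζ_j^{-l} s_{ij}`. -/
def zijMat (n r l : ℕ) (i j : Fin n) : Matrix (Fin n) (Fin n) ℂ :=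
  monoMat n (Equiv.swap i j) (zijWt r l i j)

lemma zijWt_ne_zero (r l : ℕ) {n : ℕ} (i j : Fin n) (t : Fin n) :
    zijWt r l i j t ≠ 0 := by
  unfold zijWt
  split_ifs
  · exact pow_ne_zero _ (zeta_ne_zero r)
  · exact inv_ne_zero (pow_ne_zero _ (zeta_ne_zero r))
  · exact one_ne_zero

lemma zijWt_pow {r l : ℕ} (hr : 0 < r) {n : ℕ} (i j : Fin n) (t : Fin n) :
    zijWt r l i j t ^ r = 1 := by
  unfold zijWt
  split_ifs
  · rw [← pow_mul, mul_comm, pow_mul, zeta_pow_self hr, one_pow]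
  · rw [inv_pow, ← pow_mul, mul_comm, pow_mul, zeta_pow_self hr, one_pow, inv_one]
  · exact one_pow r

lemma zijWt_prod {r l : ℕ} {n : ℕ} {i j : Fin n} (hij : i ≠ j) :
    (∏ t, zijWt r l i j t) = 1 := by
  have hfun : (fun t => zijWt r l i j t) =
      fun t => (if t = i then zeta r ^ l else 1) * (if t = j then (zeta r ^ l)⁻¹ else 1) := by
    funext t
    by_cases h1 : t = i <;> by_cases h2 : t = j
    · exact absurd (h1.symm.trans h2) hij
    · simp [zijWt, h1, h2, hij]
    · simp [zijWt, h1, h2, hij, Ne.symm hij]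
    · simp [zijWt, h1, h2]
  rw [hfun, Finset.prod_mul_distrib, Finset.prod_ite_eq' Finset.univ i,
    Finset.prod_ite_eq' Finset.univ j]
  simp [mul_inv_cancel₀ (pow_ne_zero l (zeta_ne_zero r))]

lemma zij_mem_GSet (r p n l : ℕ) (hr : 0 < r) (i j : Fin n) (hij : i ≠ j) :
    zijMat n r l i j ∈ GSet r p n := by
  refine ⟨Equiv.swap i j, zijWt r l i j, zijWt_pow hr i j, ?_, rfl⟩
  rw [zijWt_prod hij, one_pow]

/-- A monomial matrix with nonzero weights, as an element of `GL_n(ℂ)`. -/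
def monoUnit (n : ℕ) (π : Equiv.Perm (Fin n)) (a : Fin n → ℂ) (ha : ∀ i, a i ≠ 0) :
    GLn n where
  val := monoMat n π a
  inv := monoMat n π⁻¹ (fun j => (a (π⁻¹ j))⁻¹)
  val_inv := monoMat_mul_inv n π a ha
  inv_val := by
    simp only [monoMat_mul]
    rw [inv_mul_cancel,
      show (fun j => (a (π⁻¹ (π j)))⁻¹ * a j) = fun _ : Fin n => (1 : ℂ) from
        funext fun j => by rw [show π⁻¹ (π j) = j from Equiv.symm_apply_apply π j, inv_mul_cancel₀ (ha _)],
      monoMat_one]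

/-- The element `ζ_i^l ζ_j^{-l} s_{ij}` of `G(r,p,n)`. -/
def zijG (r p n l : ℕ) (hr : 0 < r) (i j : Fin n) (hij : i ≠ j) : ↥(GGroup r p n hr) :=
  ⟨monoUnit n (Equiv.swap i j) (zijWt r l i j) (zijWt_ne_zero r l i j),
   zij_mem_GSet r p n l hr i j hij⟩

/-- The element `κ_{r,n} = (1/r)·Σ_{l<r} Σ_{i<j} ζ_i^l ζ_j^{-l} s_{ij}` of the group
algebra `ℂ[G(r,p,n)]`. -/
def kappaGA (r p n : ℕ) (hr : 0 < r) : MonoidAlgebra ℂ ↥(GGroup r p n hr) :=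
  (1 / (r : ℂ)) • ∑ l ∈ Finset.range r, ∑ i : Fin n, ∑ j : Fin n,
    if h : i < j then MonoidAlgebra.single (zijG r p n l hr i j h.ne) 1 else 0

lemma zijL_last (r l : ℕ) {n : ℕ} (hn : 0 < n) (i j : Fin n)
    (hi : i ≠ lastIdx n hn) (hj : j ≠ lastIdx n hn) :
    zijMat n r l i j (lastIdx n hn) (lastIdx n hn) ≠ 0 := by
  have hswap : Equiv.swap i j (lastIdx n hn) = lastIdx n hn :=
    Equiv.swap_apply_of_ne_of_ne (Ne.symm hi) (Ne.symm hj)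
  rw [zijMat, monoMat_last_entry hn _ _ hswap]
  exact zijWt_ne_zero r l i j _

/-- The element `ζ_i^l ζ_j^{-l} s_{ij}` of `L(r,p,n)`, for `i, j ≤ n-1`. -/
def zijL (r p n l : ℕ) (hr : 0 < r) (hn : 0 < n) (i j : Fin n) (hij : i ≠ j)
    (hi : i ≠ lastIdx n hn) (hj : j ≠ lastIdx n hn) : ↥(LGroup r p n hr hn) :=
  ⟨monoUnit n (Equiv.swap i j) (zijWt r l i j) (zijWt_ne_zero r l i j),
   ⟨zij_mem_GSet r p n l hr i j hij, zijL_last r l hn i j hi hj⟩⟩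

/-- The element `κ_{r,n-1} = (1/r)·Σ_{l<r} Σ_{1≤i<j≤n-1} ζ_i^l ζ_j^{-l} s_{ij}` of the
group algebra `ℂ[L(r,p,n)]`. -/
def kappaLA (r p n : ℕ) (hr : 0 < r) (hn : 0 < n) :
    MonoidAlgebra ℂ ↥(LGroup r p n hr hn) :=
  (1 / (r : ℂ)) • ∑ l ∈ Finset.range r, ∑ i : Fin n, ∑ j : Fin n,
    if h : i < j ∧ (j : ℕ) < n - 1 then
      MonoidAlgebra.single
        (zijL r p n l hr hn i j h.1.ne
          (by
            refine Fin.ne_of_val_ne ?_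
            have h1 : (i : ℕ) < (j : ℕ) := h.1
            have h2 : (j : ℕ) < n - 1 := h.2
            show (i : ℕ) ≠ n - 1
            omega)
          (by
            refine Fin.ne_of_val_ne ?_
            have h2 : (j : ℕ) < n - 1 := h.2
            show (j : ℕ) ≠ n - 1
            omega)) 1
    else 0

/-! ## The induced representation of statement on `Ind_L^G σ` -/

/-- The right regular representation of a group `G` on the space of functions
`G → ℂ`, given by `(x · f)(g) = f(g x)`. -/
def regRep (G : Type*) [Group G] : Representation ℂ G (G → ℂ) where
  toFun x :=
    { toFun := fun f => fun g => f (g * x)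
      map_add' := fun f g => rfl
      map_smul' := fun c f => rfl }
  map_one' := by
    refine LinearMap.ext fun f => ?_
    funext g
    simp
  map_mul' x y := by
    refine LinearMap.ext fun f => ?_
    funext g
    simp [Module.End.mul_apply, mul_assoc]

/-- The space of functions `f : G(r,p,n) → ℂ` with `f(hg) = σ(h)·f(g)` for all
`h ∈ L(r,p,n)`, where `σ(h)` is the `(n,n)` entry of `h`. -/
def IndSig (r p n : ℕ) (hr : 0 < r) (hn : 0 < n) :
    Submodule ℂ (↥(GGroup r p n hr) → ℂ) where
  carrier := {f | ∀ h g : ↥(GGroup r p n hr),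
    ((h : GLn n) : Matrix (Fin n) (Fin n) ℂ) ∈ LSet r p n hn →
    f (h * g) = ((h : GLn n) : Matrix (Fin n) (Fin n) ℂ) (lastIdx n hn) (lastIdx n hn) * f g}
  add_mem' := by
    intro a b ha hb h g hh
    simp [ha h g hh, hb h g hh, mul_add]
  zero_mem' := by intro h g hh; simp
  smul_mem' := by
    intro c a ha h g hh
    simp [ha h g hh]
    ring

lemma IndSig_invariant (r p n : ℕ) (hr : 0 < r) (hn : 0 < n) :
    RepInvariant (regRep ↥(GGroup r p n hr)) (IndSig r p n hr hn) := by
  intro x f hf h g hh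
  show f ((h * g) * x) = _ * f (g * x)
  rw [mul_assoc]
  exact hf h (g * x) hh

/-- The natural representation of `G(r,p,n)` on `ℂ^n` by matrix-vector
multiplication. -/
def natRep (r p n : ℕ) (hr : 0 < r) : Representation ℂ ↥(GGroup r p n hr) (Fin n → ℂ) where
  toFun g := Matrix.mulVecLin ((g : GLn n) : Matrix (Fin n) (Fin n) ℂ)
  map_one' := by
    simp only [OneMemClass.coe_one, Units.val_one, Matrix.mulVecLin_one]
    rfl
  map_mul' g h := by
    simp only [Subgroup.coe_mul, Units.val_mul, Matrix.mulVecLin_mul]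
    rw [Module.End.mul_eq_comp]

/-! ## The operators `Z_{t,r}` and `Z_{t+1/2,r}` -/

/-- `S ∪ S′` as a finite subset of `Fin t ⊕ Fin t`. -/
def SSfin {t : ℕ} (S : Finset (Fin t)) : Finset (Fin t ⊕ Fin t) :=
  Finset.univ.filter fun x => Sum.elim (· ∈ S) (· ∈ S) x

/-- The set partition `b_S` with blocks `S ∪ S′` and `{l,l′}` for `l ∉ S`. -/
def bS {t : ℕ} (S : Finset (Fin t)) : SP t :=
  Setoid.ker fun x : Fin t ⊕ Fin t =>
    if x ∈ SSfin S then (none : Option (Fin t ⊕ Fin t)) else some x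

/-- The set partition `d_I` with blocks `I`, `(S ∪ S′) \ I` and `{l,l′}` for `l ∉ S`. -/
def dI {t : ℕ} (S : Finset (Fin t)) (I : Finset (Fin t ⊕ Fin t)) : SP t :=
  Setoid.ker fun x : Fin t ⊕ Fin t =>
    if x ∈ I then (Sum.inl true : Bool ⊕ (Fin t ⊕ Fin t))
    else if x ∈ SSfin S then Sum.inl false else Sum.inr x

/-- `N(I)` : the number of top-row (unprimed) elements of `I`. -/
def NIc {t : ℕ} (I : Finset (Fin t ⊕ Fin t)) : ℕ :=
  (I.filter fun x => x.isLeft = true).card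

/-- `M(I)` : the number of bottom-row (primed) elements of `I`. -/
def MIc {t : ℕ} (I : Finset (Fin t ⊕ Fin t)) : ℕ :=
  (I.filter fun x => x.isRight = true).card

/-- The operator `Z_{t,r}` on `V^{⊗t}`.  The inner sum over unordered partitions
`{I, (S∪S′)∖I}` (each counted once) is written as `1/2` times the sum over ordered
proper nonempty subsets `I` of `S ∪ S′`; these agree since `d_I = d_{(S∪S′)∖I}` and
the signs coincide. -/
def Zop (r n t : ℕ) : TP n t →ₗ[ℂ] TP n t :=
  (n.choose 2 : ℂ) • LinearMap.id +
  ∑ S ∈ (Finset.univ : Finset (Fin t)).powerset.filter (fun S => S ≠ ∅),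
    ((-1 : ℂ) ^ S.card) •
      (((n : ℂ) - 1) • phiD n t (bS S) +
        (1 / 2 : ℂ) •
          ∑ I ∈ (SSfin S).powerset.filter (fun I =>
              I ≠ ∅ ∧ I ≠ SSfin S ∧ ((NIc I : ℤ) ≡ (MIc I : ℤ) [ZMOD (r : ℤ)])),
            ((-1 : ℂ) ^ ((NIc I : ℤ) - (MIc I : ℤ))) • (phiD n t (dI S I) - phiD n t (bS S)))

/-- The operator `Z_{k+1/2,r}` on `V^{⊗(k+1)}`; as in `Zop`, but for `S` containing
`k+1` the inner sum is restricted to partitions in which `k+1` and `(k+1)′` lie in the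
same part. -/
def ZopHalf (r n k : ℕ) : TP n (k + 1) →ₗ[ℂ] TP n (k + 1) :=
  (n.choose 2 : ℂ) • LinearMap.id +
  ∑ S ∈ (Finset.univ : Finset (Fin (k + 1))).powerset.filter (fun S => S ≠ ∅),
    ((-1 : ℂ) ^ S.card) •
      (((n : ℂ) - 1) • phiD n (k + 1) (bS S) +
        (1 / 2 : ℂ) •
          ∑ I ∈ (SSfin S).powerset.filter (fun I =>
              I ≠ ∅ ∧ I ≠ SSfin S ∧ ((NIc I : ℤ) ≡ (MIc I : ℤ) [ZMOD (r : ℤ)]) ∧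
              (Fin.last k ∈ S →
                ((Sum.inl (Fin.last k) : Fin (k+1) ⊕ Fin (k+1)) ∈ I ↔
                  (Sum.inr (Fin.last k) : Fin (k+1) ⊕ Fin (k+1)) ∈ I))),
            ((-1 : ℂ) ^ ((NIc I : ℤ) - (MIc I : ℤ))) •
              (phiD n (k + 1) (dI S I) - phiD n (k + 1) (bS S)))

/-- The diagonal action of `κ_{r,n}` on `V^{⊗k}`. -/
def kappaOpFull (r n k : ℕ) : TP n k →ₗ[ℂ] TP n k :=
  (1 / (r : ℂ)) • ∑ l ∈ Finset.range r, ∑ i : Fin n, ∑ j : Fin n,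
    if i < j then tensorPow n k (zijMat n r l i j) else 0

/-- The diagonal action of `κ_{r,n-1}` on `V^{⊗(k+1)}`. -/
def kappaOpL (r n k : ℕ) : TP n (k + 1) →ₗ[ℂ] TP n (k + 1) :=
  (1 / (r : ℂ)) • ∑ l ∈ Finset.range r, ∑ i : Fin n, ∑ j : Fin n,
    if i < j ∧ (j : ℕ) < n - 1 then tensorPow n (k + 1) (zijMat n r l i j) else 0

/-- `w ⊗ v_n ∈ V^{⊗(k+1)}` for `w ∈ V^{⊗k}`. -/
def extendLast (n k : ℕ) (hn : 0 < n) (w : TP n k) : TP n (k + 1) :=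
  fun j => if j (Fin.last k) = lastIdx n hn then w (fun t => j t.castSucc) else 0

/-- `A ⊗ Id_{V^{⊗(l-j)}}` : the extension of an operator on `V^{⊗j}` to `V^{⊗l}`,
acting on the first `j` tensor factors. -/
def extendOp (n j l : ℕ) (hjl : j ≤ l) (A : TP n j →ₗ[ℂ] TP n j) :
    TP n l →ₗ[ℂ] TP n l where
  toFun f := fun u =>
    A (fun x : Fin j → Fin n =>
        f (fun t : Fin l => if h : (t : ℕ) < j then x ⟨t, h⟩ else u t))
      (fun s : Fin j => u (Fin.castLE hjl s))
  map_add' f g := by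
    funext u
    show A (fun x : Fin j → Fin n =>
        (f + g) (fun t : Fin l => if h : (t : ℕ) < j then x ⟨t, h⟩ else u t))
      (fun s : Fin j => u (Fin.castLE hjl s)) =
      A (fun x : Fin j → Fin n =>
        f (fun t : Fin l => if h : (t : ℕ) < j then x ⟨t, h⟩ else u t))
      (fun s : Fin j => u (Fin.castLE hjl s)) +
      A (fun x : Fin j → Fin n =>
        g (fun t : Fin l => if h : (t : ℕ) < j then x ⟨t, h⟩ else u t))
      (fun s : Fin j => u (Fin.castLE hjl s))
    have h : (fun x : Fin j → Fin n =>
        (f + g) (fun t : Fin l => if h : (t : ℕ) < j then x ⟨t, h⟩ else u t)) =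
      (fun x : Fin j → Fin n =>
        f (fun t : Fin l => if h : (t : ℕ) < j then x ⟨t, h⟩ else u t)) +
      (fun x : Fin j → Fin n =>
        g (fun t : Fin l => if h : (t : ℕ) < j then x ⟨t, h⟩ else u t)) := rfl
    rw [h, map_add]
    rfl
  map_smul' c f := by
    funext u
    show A (fun x : Fin j → Fin n =>
        (c • f) (fun t : Fin l => if h : (t : ℕ) < j then x ⟨t, h⟩ else u t))
      (fun s : Fin j => u (Fin.castLE hjl s)) =
      c • (A (fun x : Fin j → Fin n =>
        f (fun t : Fin l => if h : (t : ℕ) < j then x ⟨t, h⟩ else u t))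
      (fun s : Fin j => u (Fin.castLE hjl s)))
    have h : (fun x : Fin j → Fin n =>
        (c • f) (fun t : Fin l => if h : (t : ℕ) < j then x ⟨t, h⟩ else u t)) =
      c • (fun x : Fin j → Fin n =>
        f (fun t : Fin l => if h : (t : ℕ) < j then x ⟨t, h⟩ else u t)) := rfl
    rw [h, _root_.map_smul]
    rfl

/-! ## Diagram multiplication (statement of the structure constants) -/

/-- The bottom row of `d₁` matches the top row of `d₂`. -/
def rowMatch (k : ℕ) (d1 d2 : SP k) : Prop :=
  ∀ i j : Fin k, d1.r (Sum.inr i) (Sum.inr j) ↔ d2.r (Sum.inl i) (Sum.inl j)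

/-- Extend a setoid on `α` along an injection `e : α → β` by singleton classes on
the complement of the range. -/
def extendSetoid {α β : Type*} (e : α → β) (he : Function.Injective e)
    (d : Setoid α) : Setoid β where
  r x y := x = y ∨ ∃ a b, d.r a b ∧ x = e a ∧ y = e b
  iseqv := by
    constructor
    · intro x; exact Or.inl rfl
    · rintro x y (rfl | ⟨a, b, hab, rfl, rfl⟩)
      · exact Or.inl rfl
      · exact Or.inr ⟨b, a, d.iseqv.symm hab, rfl, rfl⟩
    · rintro x y z (rfl | ⟨a, b, hab, rfl, rfl⟩) h2
      · exact h2
      · rcases h2 with rfl | ⟨a', b', hab', hy, rfl⟩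
        · exact Or.inr ⟨a, b, hab, rfl, rfl⟩
        · have hba : b = a' := he hy
          exact Or.inr ⟨a, b', d.iseqv.trans hab (hba ▸ hab'), rfl, rfl⟩

/-- The three-row vertex set: top row, middle row, bottom row. -/
abbrev T3 (k : ℕ) : Type := Fin k ⊕ (Fin k ⊕ Fin k)

/-- `d₁` placed on the top and middle rows. -/
def embT (k : ℕ) : Fin k ⊕ Fin k → T3 k := Sum.map id Sum.inl

/-- `d₂` placed on the middle and bottom rows. -/
def embB (k : ℕ) : Fin k ⊕ Fin k → T3 k := Sum.inr

/-- The outer (top and bottom) rows. -/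
def embO (k : ℕ) : Fin k ⊕ Fin k → T3 k := Sum.map id Sum.inr

lemma embT_inj (k : ℕ) : Function.Injective (embT k) :=
  Function.Injective.sumMap Function.injective_id Sum.inl_injective

/-- The stacked three-row diagram : the join of `d₁` (on top∪middle) and `d₂`
(on middle∪bottom); its classes are the connected components. -/
def stacked (k : ℕ) (d1 d2 : SP k) : Setoid (T3 k) :=
  extendSetoid (embT k) (embT_inj k) d1 ⊔ extendSetoid (embB k) Sum.inr_injective d2

/-- The concatenation `d₁ ∘ d₂`, i.e. the restriction of the stacked diagram to the
outer rows. -/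
def compSetoid (k : ℕ) (d1 d2 : SP k) : SP k :=
  Setoid.comap (embO k) (stacked k d1 d2)

/-- `[d₁ ∘ d₂]` : the number of connected components of the stacked diagram contained
entirely in the middle row. -/
def midCount (k : ℕ) (d1 d2 : SP k) : ℕ :=
  Nat.card {q : Quotient (stacked k d1 d2) //
    ∀ x : T3 k, Quotient.mk (stacked k d1 d2) x = q → ∃ i : Fin k, x = Sum.inr (Sum.inl i)}

/-- A block entirely contained in the top row. -/
def topOnly {k : ℕ} (d : SP k) (q : Quotient d) : Prop :=
  ∀ x, Quotient.mk d x = q → ∃ i : Fin k, x = Sum.inl i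

/-- A block entirely contained in the bottom row. -/
def botOnly {k : ℕ} (d : SP k) (q : Quotient d) : Prop :=
  ∀ x, Quotient.mk d x = q → ∃ i : Fin k, x = Sum.inr i

/-- `x` lies in the block merged from the pair `pr = (q₁, q₂)`. -/
def memPair {k : ℕ} (d1 d2 : SP k) : Fin k ⊕ Fin k → Quotient d1 × Quotient d2 → Prop
  | Sum.inl i, pr => Quotient.mk d1 (Sum.inl i) = pr.1
  | Sum.inr i, pr => Quotient.mk d2 (Sum.inr i) = pr.2

/-- `d` is obtained from `d₁ ∘ d₂` by choosing an injective partial matching between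
the top-only blocks of `d₁` and the bottom-only blocks of `d₂` and merging each
matched pair into a single block. -/
def IsCoarsening (k : ℕ) (d1 d2 d : SP k) : Prop :=
  ∃ P : Finset (Quotient d1 × Quotient d2),
    (∀ pr ∈ P, topOnly d1 pr.1 ∧ botOnly d2 pr.2) ∧
    (∀ pr ∈ P, ∀ pr' ∈ P, pr.1 = pr'.1 → pr = pr') ∧
    (∀ pr ∈ P, ∀ pr' ∈ P, pr.2 = pr'.2 → pr = pr') ∧
    (∀ x y : Fin k ⊕ Fin k, d.r x y ↔
      ((compSetoid k d1 d2).r x y ∨ ∃ pr ∈ P, memPair d1 d2 x pr ∧ memPair d1 d2 y pr))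

/-- The (integer) falling factorial `(a)_b = a(a-1)⋯(a-b+1)`. -/
def fallingC (a : ℤ) (b : ℕ) : ℤ := ∏ i ∈ Finset.range b, (a - i)

/-! ## The elements `c₁, c₂` of `G(2,2,2k)` and the operator `M_{k,2,2}` -/

/-- The underlying function of the permutation `(1 2)(3 4)⋯(2k-1 2k)` of `Fin (2k)`:
it swaps `2t` and `2t+1` (0-indexed) for each `t < k`. -/
def pairFn (k : ℕ) : Fin (2 * k) → Fin (2 * k) := fun x =>
  if _ : (x : ℕ) % 2 = 0 then ⟨(x : ℕ) + 1, by have := x.2; omega⟩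
  else ⟨(x : ℕ) - 1, by have := x.2; omega⟩

lemma pairFn_invol (k : ℕ) : Function.Involutive (pairFn k) := by
  intro x
  unfold pairFn
  split_ifs with h1 h2 h3
  · refine Fin.ext ?_; simp only [Fin.val_mk] at h2 ⊢; omega
  · refine Fin.ext ?_; simp only [Fin.val_mk] at h2 ⊢; omega
  · refine Fin.ext ?_; simp only [Fin.val_mk] at h3 ⊢; omega
  · refine Fin.ext ?_; simp only [Fin.val_mk] at h3 ⊢; omega

/-- The permutation `(1 2)(3 4)⋯(2k-1 2k)` of `Fin (2k)`. -/
def pairPerm (k : ℕ) : Equiv.Perm (Fin (2 * k)) :=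
  Function.Involutive.toPerm (pairFn k) (pairFn_invol k)

/-- `c₂` : the permutation matrix of `(1 2)(3 4)⋯(2k-1 2k)`. -/
def c2Mat (k : ℕ) : Matrix (Fin (2 * k)) (Fin (2 * k)) ℂ :=
  monoMat (2 * k) (pairPerm k) (fun _ => 1)

/-- The diagonal matrix `diag(-1,-1,1,…,1)`. -/
def dMat (k : ℕ) : Matrix (Fin (2 * k)) (Fin (2 * k)) ℂ :=
  Matrix.diagonal fun t => if (t : ℕ) < 2 then (-1 : ℂ) else 1

/-- `c₁ = D · c₂`. -/
def c1Mat (k : ℕ) : Matrix (Fin (2 * k)) (Fin (2 * k)) ℂ := dMat k * c2Mat k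

/-- Two matrices are conjugate by an element of `G(r,p,n)`. -/
def conjIn (r p n : ℕ) (c x : Matrix (Fin n) (Fin n) ℂ) : Prop :=
  ∃ g ∈ GSet r p n, g * c = x * g

/-- The conjugacy class of `c` in `G(r,p,n)`. -/
def conjClass (r p n : ℕ) (c : Matrix (Fin n) (Fin n) ℂ) :
    Set (Matrix (Fin n) (Fin n) ℂ) :=
  {h | h ∈ GSet r p n ∧ conjIn r p n c h}

/-- The set partition of `{1,…,k,1′,…,k′}` all of whose blocks are singletons. -/
def singletonSP (k : ℕ) : SP k := ⟨Eq, eq_equivalence⟩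

/-- The operator `M_{k,2,2} = φ_k(x_{d₀})` on `(ℂ^{2k})^{⊗k}`, where `d₀` is the set
partition with all blocks singletons. -/
def Mop (k : ℕ) : TP (2 * k) k →ₗ[ℂ] TP (2 * k) k :=
  phiX (2 * k) k (singletonSP k)

/-! ## Auxiliary development for `statement2` -/

section Aux

variable {n k : ℕ}

/-- Indicator basis vector. -/
def indK (n k : ℕ) (i : Fin k → Fin n) : TP n k := fun j => if j = i then 1 else 0

lemma sum_mul_ite {α : Type*} [Fintype α] [DecidableEq α] (g : α → ℂ) (b : α) (v : ℂ) :
    ∑ j : α, g j * (if j = b then v else 0) = g b * v := by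
  rw [Finset.sum_eq_single_of_mem b (Finset.mem_univ _)]
  · rw [if_pos rfl]
  · intro j _ hj; rw [if_neg hj, mul_zero]

lemma kernelMap_apply (K : (Fin k → Fin n) → (Fin k → Fin n) → ℂ) (f : TP n k)
    (o : Fin k → Fin n) : kernelMap n k K f o = ∑ i, K o i * f i := rfl

lemma kernelMap_indK (K : (Fin k → Fin n) → (Fin k → Fin n) → ℂ)
    (i o : Fin k → Fin n) : kernelMap n k K (indK n k i) o = K o i := by
  rw [kernelMap_apply]
  have : ∀ j, K o j * indK n k i j = K o j * (if j = i then 1 else 0) := fun j => rfl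
  rw [Finset.sum_congr rfl fun j _ => this j, sum_mul_ite, mul_one]

/-- Matrix of an endomorphism of `TP n k`. -/
def matOf (F : TP n k →ₗ[ℂ] TP n k) : (Fin k → Fin n) → (Fin k → Fin n) → ℂ :=
  fun o i => F (indK n k i) o

lemma matOf_kernelMap (K : (Fin k → Fin n) → (Fin k → Fin n) → ℂ) :
    matOf (kernelMap n k K) = K := by
  funext o i; exact kernelMap_indK K i o

lemma repr_f (f : TP n k) : f = ∑ i : Fin k → Fin n, f i • indK n k i := by
  funext j
  rw [Finset.sum_apply]
  rw [Finset.sum_eq_single_of_mem j (Finset.mem_univ _)]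
  · simp [indK]
  · intro i _ hij
    have : ¬ (j = i) := fun h => hij h.symm
    simp [indK, this]

lemma kernelMap_matOf (F : TP n k →ₗ[ℂ] TP n k) : kernelMap n k (matOf F) = F := by
  apply LinearMap.ext; intro f
  conv_rhs => rw [repr_f f]
  rw [map_sum]
  funext o
  rw [kernelMap_apply, Finset.sum_apply]
  refine Finset.sum_congr rfl fun i _ => ?_
  rw [_root_.map_smul]
  simp only [Pi.smul_apply, smul_eq_mul]
  rw [matOf, mul_comm]

lemma kernelMap_injective :
    Function.Injective (kernelMap n k : ((Fin k → Fin n) → (Fin k → Fin n) → ℂ) → _) := by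
  intro K K' h
  rw [← matOf_kernelMap (n := n) (k := k) K, ← matOf_kernelMap (n := n) (k := k) K', h]

lemma kernelMap_comp (K1 K2 : (Fin k → Fin n) → (Fin k → Fin n) → ℂ) :
    kernelMap n k K1 ∘ₗ kernelMap n k K2 =
      kernelMap n k (fun o i => ∑ j, K1 o j * K2 j i) := by
  apply LinearMap.ext; intro f
  funext o
  show ∑ j, K1 o j * (∑ i, K2 j i * f i) = ∑ i, (∑ j, K1 o j * K2 j i) * f i
  simp_rw [Finset.mul_sum]
  rw [Finset.sum_comm]
  simp_rw [Finset.sum_mul]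
  exact Finset.sum_congr rfl fun i _ => Finset.sum_congr rfl fun j _ => (mul_assoc _ _ _).symm

lemma kernelMap_finsum {ι : Type*} (s : Finset ι) (γ : ι → ℂ)
    (Ks : ι → (Fin k → Fin n) → (Fin k → Fin n) → ℂ) :
    kernelMap n k (fun o i => ∑ d ∈ s, γ d * Ks d o i) =
      ∑ d ∈ s, γ d • kernelMap n k (Ks d) := by
  apply LinearMap.ext; intro f
  funext o
  rw [kernelMap_apply]
  simp only [LinearMap.sum_apply, LinearMap.smul_apply, Finset.sum_apply, Pi.smul_apply,
    smul_eq_mul, kernelMap_apply]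
  simp_rw [Finset.sum_mul, Finset.mul_sum]
  rw [Finset.sum_comm]
  exact Finset.sum_congr rfl fun d _ => Finset.sum_congr rfl fun i _ => (mul_assoc _ _ _)

lemma tensorPow_monoMat (π : Equiv.Perm (Fin n)) (a : Fin n → ℂ) :
    tensorPow n k (monoMat n π a) =
      kernelMap n k (fun o i => if o = fun t => π (i t) then ∏ t, a (i t) else 0) := by
  unfold tensorPow
  congr 1
  funext o i
  simp only [monoMat, Matrix.of_apply]
  by_cases h : o = fun t => π (i t)
  · rw [if_pos h]
    refine Finset.prod_congr rfl fun t _ => ?_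
    rw [if_pos (congrFun h t)]
  · rw [if_neg h]
    obtain ⟨t, ht⟩ : ∃ t, o t ≠ π (i t) := by
      by_contra hc; push_neg at hc; exact h (funext hc)
    exact Finset.prod_eq_zero (Finset.mem_univ t) (if_neg ht)

lemma comp_phiG (K : (Fin k → Fin n) → (Fin k → Fin n) → ℂ) (π : Equiv.Perm (Fin n))
    (a : Fin n → ℂ) :
    kernelMap n k K ∘ₗ tensorPow n k (monoMat n π a) =
      kernelMap n k (fun o i => K o (fun t => π (i t)) * ∏ t, a (i t)) := by
  rw [tensorPow_monoMat, kernelMap_comp]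
  congr 1
  funext o i
  exact sum_mul_ite (fun j => K o j) (fun t => π (i t)) (∏ t, a (i t))

lemma G_comp_phi (K : (Fin k → Fin n) → (Fin k → Fin n) → ℂ) (π : Equiv.Perm (Fin n))
    (a : Fin n → ℂ) :
    tensorPow n k (monoMat n π a) ∘ₗ kernelMap n k K =
      kernelMap n k (fun o i =>
        (∏ t, a (π.symm (o t))) * K (fun t => π.symm (o t)) i) := by
  rw [tensorPow_monoMat, kernelMap_comp]
  congr 1
  funext o i
  rw [Finset.sum_eq_single_of_mem (fun t => π.symm (o t)) (Finset.mem_univ _)]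
  · rw [if_pos]
    funext t
    simp
  · intro j _ hj
    rw [if_neg, zero_mul]
    intro hoj
    apply hj
    funext t
    have := congrFun hoj t
    rw [this, Equiv.symm_apply_apply]

lemma comm_iff (K : (Fin k → Fin n) → (Fin k → Fin n) → ℂ) (π : Equiv.Perm (Fin n))
    (a : Fin n → ℂ) :
    kernelMap n k K ∘ₗ tensorPow n k (monoMat n π a) =
        tensorPow n k (monoMat n π a) ∘ₗ kernelMap n k K ↔
      ∀ o i, K (fun t => π (o t)) (fun t => π (i t)) * ∏ t, a (i t) =
        (∏ t, a (o t)) * K o i := by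
  rw [comp_phiG, G_comp_phi]
  constructor
  · intro h o i
    have h' := congrFun (congrFun (kernelMap_injective h) (fun t => π (o t))) i
    simp only [Equiv.symm_apply_apply] at h'
    exact h'
  · intro h
    congr 1
    funext o i
    have h' := h (fun t => π.symm (o t)) i
    simp only [Equiv.apply_symm_apply] at h'
    exact h'

/-! ### Counting values in tuples -/

/-- Number of top-row positions with value `v`. -/
def Nv (c : Fin k ⊕ Fin k → Fin n) (v : Fin n) : ℕ :=
  (Finset.univ.filter fun t => c (Sum.inl t) = v).card

/-- Number of bottom-row positions with value `v`. -/
def Mv (c : Fin k ⊕ Fin k → Fin n) (v : Fin n) : ℕ :=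
  (Finset.univ.filter fun t => c (Sum.inr t) = v).card

/-- `N(v) - M(v)` as an integer. -/
def dv (c : Fin k ⊕ Fin k → Fin n) (v : Fin n) : ℤ := (Nv c v : ℤ) - (Mv c v : ℤ)

lemma prod_eq_prod_pow (a : Fin n → ℂ) (f : Fin k → Fin n) :
    ∏ t, a (f t) = ∏ v, a v ^ (Finset.univ.filter fun t => f t = v).card := by
  rw [← Finset.prod_fiberwise_of_maps_to (g := f) (t := Finset.univ)
      (fun x _ => Finset.mem_univ (f x)) (fun t => a (f t))]
  refine Finset.prod_congr rfl fun v _ => ?_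
  rw [Finset.prod_congr rfl (fun t ht => congrArg a (Finset.mem_filter.mp ht).2),
    Finset.prod_const]

lemma zpow_eq_one_of_dvd {a : ℂ} {r : ℕ} (har : a ^ r = 1) {s : ℤ}
    (h : (r : ℤ) ∣ s) : a ^ s = 1 := by
  obtain ⟨t, rfl⟩ := h
  rw [_root_.zpow_mul, zpow_natCast, har, _root_.one_zpow]

lemma prod_ratio (a : Fin n → ℂ) (ha : ∀ v, a v ≠ 0) (c : Fin k ⊕ Fin k → Fin n) :
    ((∏ t, a (c (Sum.inl t))) = ∏ t, a (c (Sum.inr t))) ↔ ∏ v, a v ^ dv c v = 1 := by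
  have h1 : ∏ t, a (c (Sum.inl t)) = ∏ v, a v ^ Nv c v :=
    prod_eq_prod_pow a (fun t => c (Sum.inl t))
  have h2 : ∏ t, a (c (Sum.inr t)) = ∏ v, a v ^ Mv c v :=
    prod_eq_prod_pow a (fun t => c (Sum.inr t))
  have h3 : ∏ v, a v ^ dv c v = (∏ v, a v ^ Nv c v) / (∏ v, a v ^ Mv c v) := by
    rw [← Finset.prod_div_distrib]
    refine Finset.prod_congr rfl fun v _ => ?_
    rw [show dv c v = (Nv c v : ℤ) - (Mv c v : ℤ) from rfl, zpow_sub₀ (ha v),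
      zpow_natCast, zpow_natCast]
  have h4 : (∏ v, a v ^ Mv c v) ≠ 0 :=
    Finset.prod_ne_zero_iff.mpr fun v _ => pow_ne_zero _ (ha v)
  rw [h1, h2, h3, div_eq_one_iff_eq h4]

/-- The condition on a combined tuple allowing a nonzero centralizer coefficient. -/
def goodT (r p : ℕ) (c : Fin k ⊕ Fin k → Fin n) : Prop :=
  (∀ v, (r : ℤ) ∣ dv c v) ∨
    ((∀ v, ((r / p : ℕ) : ℤ) ∣ dv c v) ∧ ∀ v w, (r : ℤ) ∣ dv c v - dv c w)

lemma good_prod {r p : ℕ} (hn : 0 < n) (c : Fin k ⊕ Fin k → Fin n) (a : Fin n → ℂ)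
    (ha0 : ∀ v, a v ≠ 0) (har : ∀ v, a v ^ r = 1) (hm : (∏ v, a v) ^ (r / p) = 1)
    (hg : goodT r p c) : ∏ v, a v ^ dv c v = 1 := by
  rcases hg with hg | ⟨hB, hC⟩
  · exact Finset.prod_eq_one fun v _ => zpow_eq_one_of_dvd (har v) (hg v)
  · have v0 : Fin n := ⟨0, hn⟩
    have heach : ∀ v, a v ^ dv c v = a v ^ dv c v0 := by
      intro v
      have h1 : a v ^ (dv c v - dv c v0) = 1 := zpow_eq_one_of_dvd (har v) (hC v v0)
      calc a v ^ dv c v = a v ^ (dv c v0 + (dv c v - dv c v0)) := by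
              congr 1; ring
        _ = a v ^ dv c v0 * a v ^ (dv c v - dv c v0) := zpow_add₀ (ha0 v) _ _
        _ = a v ^ dv c v0 := by rw [h1, mul_one]
    rw [Finset.prod_congr rfl fun v _ => heach v, Finset.prod_zpow]
    obtain ⟨e, he⟩ := hB v0
    rw [he, _root_.zpow_mul, zpow_natCast, hm, _root_.one_zpow]

lemma notgood_exists {r p : ℕ} (hr : 0 < r) (hp : 0 < p) (hpr : p ∣ r)
    (c : Fin k ⊕ Fin k → Fin n) (hg : ¬ goodT r p c) :
    ∃ a : Fin n → ℂ, (∀ v, a v ^ r = 1) ∧ (∏ v, a v) ^ (r / p) = 1 ∧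
      ∏ v, a v ^ dv c v ≠ 1 := by
  have hprim : IsPrimitiveRoot (zeta r) r := by
    rw [zeta]; exact Complex.isPrimitiveRoot_exp r hr.ne'
  have hz1 : zeta r ^ r = 1 := zeta_pow_self hr
  by_cases hC : ∀ v w, (r : ℤ) ∣ dv c v - dv c w
  · have hB : ¬ ∀ v, ((r / p : ℕ) : ℤ) ∣ dv c v := fun hB => hg (Or.inr ⟨hB, hC⟩)
    push_neg at hB
    obtain ⟨v0, hv0⟩ := hB
    refine ⟨fun v => if v = v0 then zeta r ^ p else 1, fun v => ?_, ?_, ?_⟩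
    · dsimp only
      by_cases h : v = v0
      · rw [if_pos h, ← pow_mul, mul_comm p r, pow_mul, hz1, one_pow]
      · rw [if_neg h, one_pow]
    · rw [Finset.prod_ite_eq' Finset.univ v0 (fun _ => zeta r ^ p),
        if_pos (Finset.mem_univ _), ← pow_mul, Nat.mul_div_cancel' hpr, hz1]
    · have hcv : ∀ v : Fin n, (if v = v0 then zeta r ^ p else 1 : ℂ) ^ dv c v
          = if v = v0 then (zeta r ^ p) ^ dv c v else 1 := by
        intro v
        by_cases h : v = v0
        · rw [if_pos h, if_pos h]
        · rw [if_neg h, if_neg h, _root_.one_zpow]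
      rw [Finset.prod_congr rfl fun v _ => hcv v,
        Finset.prod_ite_eq' Finset.univ v0 (fun v => (zeta r ^ p) ^ dv c v),
        if_pos (Finset.mem_univ _)]
      intro h1
      rw [← zpow_natCast (zeta r) p, ← _root_.zpow_mul] at h1
      have hdvd := (hprim.zpow_eq_one_iff_dvd _).mp h1
      apply hv0
      obtain ⟨e, he⟩ := hdvd
      have hp' : (p : ℤ) ≠ 0 := by exact_mod_cast hp.ne'
      have hrpm : (r : ℤ) = (p : ℤ) * ((r / p : ℕ) : ℤ) := by
        rw [← Nat.cast_mul, Nat.mul_div_cancel' hpr]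
      refine ⟨e, mul_left_cancel₀ hp' ?_⟩
      calc (p : ℤ) * dv c v0 = (r : ℤ) * e := he
        _ = (p : ℤ) * (((r / p : ℕ) : ℤ) * e) := by rw [hrpm]; ring
  · push_neg at hC
    obtain ⟨v, w, hvw⟩ := hC
    have hvne : v ≠ w := by rintro rfl; exact hvw (by simp)
    refine ⟨fun x => if x = v then zeta r else if x = w then (zeta r)⁻¹ else 1,
      fun x => ?_, ?_, ?_⟩
    · dsimp only
      by_cases h1 : x = v
      · rw [if_pos h1, hz1]
      · by_cases h2 : x = w
        · rw [if_neg h1, if_pos h2, inv_pow, hz1, inv_one]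
        · rw [if_neg h1, if_neg h2, one_pow]
    · have hfun : ∀ x, (if x = v then zeta r else if x = w then (zeta r)⁻¹ else 1)
          = (if x = v then zeta r else 1) * (if x = w then (zeta r)⁻¹ else 1) := by
        intro x
        by_cases h1 : x = v <;> by_cases h2 : x = w
        · exact absurd (h1.symm.trans h2) hvne
        · simp [h1, h2, hvne]
        · simp [h1, h2, Ne.symm hvne]
        · simp [h1, h2]
      rw [Finset.prod_congr rfl fun x _ => hfun x, Finset.prod_mul_distrib,
        Finset.prod_ite_eq' Finset.univ v (fun _ => zeta r),
        Finset.prod_ite_eq' Finset.univ w (fun _ => (zeta r)⁻¹),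
        if_pos (Finset.mem_univ _), if_pos (Finset.mem_univ _),
        mul_inv_cancel₀ (zeta_ne_zero r), one_pow]
    · have hfun : ∀ x, (if x = v then zeta r else if x = w then (zeta r)⁻¹ else 1) ^ dv c x
          = (if x = v then zeta r ^ dv c x else 1) *
            (if x = w then ((zeta r)⁻¹) ^ dv c x else 1) := by
        intro x
        by_cases h1 : x = v <;> by_cases h2 : x = w
        · exact absurd (h1.symm.trans h2) hvne
        · simp [h1, h2, hvne]
        · simp [h1, h2, Ne.symm hvne]
        · simp [h1, h2]
      rw [Finset.prod_congr rfl fun x _ => hfun x, Finset.prod_mul_distrib,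
        Finset.prod_ite_eq' Finset.univ v (fun x => zeta r ^ dv c x),
        Finset.prod_ite_eq' Finset.univ w (fun x => ((zeta r)⁻¹) ^ dv c x),
        if_pos (Finset.mem_univ _), if_pos (Finset.mem_univ _)]
      intro h1
      have hi : ((zeta r)⁻¹) ^ dv c w = zeta r ^ (- dv c w) := by
        rw [_root_.zpow_neg]
        exact _root_.inv_zpow _ _
      rw [hi, ← zpow_add₀ (zeta_ne_zero r)] at h1
      have hd := (hprim.zpow_eq_one_iff_dvd _).mp h1
      exact hvw (by rwa [← sub_eq_add_neg] at hd)

/-! ### Relating tuple counts with block counts -/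

lemma modEq_iff_dvd_sub {N M R : ℤ} : N ≡ M [ZMOD R] ↔ R ∣ N - M := by
  rw [Int.modEq_iff_dvd]
  exact dvd_sub_comm

lemma topCt_ker (c : Fin k ⊕ Fin k → Fin n) (x : Fin k ⊕ Fin k) :
    topCt (Setoid.ker c) (Quotient.mk (Setoid.ker c) x) = Nv c (c x) := by
  rw [topCt, Nat.card_eq_fintype_card, Nv, ← Fintype.card_subtype]
  apply Fintype.card_congr
  apply Equiv.subtypeEquivRight
  intro a
  rw [Quotient.eq]
  exact Iff.rfl

lemma botCt_ker (c : Fin k ⊕ Fin k → Fin n) (x : Fin k ⊕ Fin k) :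
    botCt (Setoid.ker c) (Quotient.mk (Setoid.ker c) x) = Mv c (c x) := by
  rw [botCt, Nat.card_eq_fintype_card, Mv, ← Fintype.card_subtype]
  apply Fintype.card_congr
  apply Equiv.subtypeEquivRight
  intro a
  rw [Quotient.eq]
  exact Iff.rfl

lemma Nv_eq_zero {c : Fin k ⊕ Fin k → Fin n} {v : Fin n} (hv : v ∉ Set.range c) :
    Nv c v = 0 := by
  rw [Nv, Finset.card_eq_zero, Finset.filter_eq_empty_iff]
  exact fun {t} _ h => hv ⟨_, h⟩

lemma Mv_eq_zero {c : Fin k ⊕ Fin k → Fin n} {v : Fin n} (hv : v ∉ Set.range c) :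
    Mv c v = 0 := by
  rw [Mv, Finset.card_eq_zero, Finset.filter_eq_empty_iff]
  exact fun {t} _ h => hv ⟨_, h⟩

lemma dv_eq_zero {c : Fin k ⊕ Fin k → Fin n} {v : Fin n} (hv : v ∉ Set.range c) :
    dv c v = 0 := by
  rw [show dv c v = (Nv c v : ℤ) - (Mv c v : ℤ) from rfl, Nv_eq_zero hv, Mv_eq_zero hv,
    sub_self]

lemma nBlocks_ker_le (c : Fin k ⊕ Fin k → Fin n) : nBlocks (Setoid.ker c) ≤ n := by
  rw [nBlocks, Nat.card_congr (Setoid.quotientKerEquivRange c)]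
  calc Nat.card (Set.range c) ≤ Nat.card (Fin n) :=
        Nat.card_le_card_of_injective _ Subtype.val_injective
    _ = n := Nat.card_eq_fintype_card.trans (Fintype.card_fin n)

lemma range_eq_univ_of_nBlocks (c : Fin k ⊕ Fin k → Fin n)
    (h : nBlocks (Setoid.ker c) = n) : Set.range c = Set.univ := by
  rw [nBlocks, Nat.card_congr (Setoid.quotientKerEquivRange c)] at h
  have h2 : (Set.range c).toFinset.card = n := by
    rw [Set.toFinset_card, ← Nat.card_eq_fintype_card]
    exact h
  have h3 := Finset.eq_univ_of_card _ (h2.trans (Fintype.card_fin n).symm)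
  exact Set.eq_univ_iff_forall.mpr fun v => Set.mem_toFinset.mp (h3 ▸ Finset.mem_univ v)

lemma nBlocks_eq_of_range_univ (c : Fin k ⊕ Fin k → Fin n)
    (h : Set.range c = Set.univ) : nBlocks (Setoid.ker c) = n := by
  rw [nBlocks, Nat.card_congr (Setoid.quotientKerEquivRange c), h,
    Nat.card_congr (Equiv.Set.univ (Fin n)), Nat.card_eq_fintype_card, Fintype.card_fin]

lemma good_iff_mem (r p : ℕ) (c : Fin k ⊕ Fin k → Fin n) :
    goodT r p c ↔ inPi r (Setoid.ker c) ∨ inLambda r p n (Setoid.ker c) := by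
  constructor
  · rintro (hA | ⟨hB, hC⟩)
    · left
      intro q
      obtain ⟨x, rfl⟩ := Quotient.exists_rep q
      rw [topCt_ker, botCt_ker, modEq_iff_dvd_sub]
      exact hA (c x)
    · by_cases hA : ∀ v, (r : ℤ) ∣ dv c v
      · left
        intro q
        obtain ⟨x, rfl⟩ := Quotient.exists_rep q
        rw [topCt_ker, botCt_ker, modEq_iff_dvd_sub]
        exact hA (c x)
      · right
        push_neg at hA
        obtain ⟨v1, hv1⟩ := hA
        have hrange : Set.range c = Set.univ := by
          rw [Set.eq_univ_iff_forall]
          intro v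
          by_contra hv
          have hdv : dv c v = 0 := dv_eq_zero hv
          have h2 := hC v1 v
          rw [hdv, sub_zero] at h2
          exact hv1 h2
        refine ⟨nBlocks_eq_of_range_univ c hrange, ?_, ?_⟩
        · intro q
          obtain ⟨x, rfl⟩ := Quotient.exists_rep q
          rw [topCt_ker, botCt_ker]
          constructor
          · rw [modEq_iff_dvd_sub]
            exact hB (c x)
          · rw [modEq_iff_dvd_sub]
            intro hd
            have h2 := hC v1 (c x)
            have hd' : (r : ℤ) ∣ dv c (c x) := hd
            have h3 : (r : ℤ) ∣ dv c v1 := by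
              have h4 := dvd_add h2 hd'
              simpa using h4
            exact hv1 h3
        · intro q q'
          obtain ⟨x, rfl⟩ := Quotient.exists_rep q
          obtain ⟨x', rfl⟩ := Quotient.exists_rep q'
          rw [topCt_ker, botCt_ker, topCt_ker, botCt_ker, modEq_iff_dvd_sub]
          have h2 := hC (c x) (c x')
          rw [show dv c (c x) - dv c (c x') =
            ((Nv c (c x) : ℤ) - Mv c (c x)) - ((Nv c (c x') : ℤ) - Mv c (c x')) from rfl] at h2
          exact h2
  · rintro (hPi | ⟨hn', hqs, hcom⟩)
    · left
      intro v
      by_cases hv : v ∈ Set.range c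
      · obtain ⟨x, rfl⟩ := hv
        have h2 := hPi (Quotient.mk _ x)
        rw [topCt_ker, botCt_ker, modEq_iff_dvd_sub] at h2
        exact h2
      · rw [dv_eq_zero hv]
        exact dvd_zero _
    · right
      have hrange := range_eq_univ_of_nBlocks c hn'
      have hmem : ∀ v : Fin n, ∃ x, c x = v := fun v =>
        (hrange ▸ Set.mem_univ v : v ∈ Set.range c)
      constructor
      · intro v
        obtain ⟨x, rfl⟩ := hmem v
        have h2 := (hqs (Quotient.mk _ x)).1
        rw [topCt_ker, botCt_ker, modEq_iff_dvd_sub] at h2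
        exact h2
      · intro v w
        obtain ⟨x, rfl⟩ := hmem v
        obtain ⟨x', rfl⟩ := hmem w
        have h2 := hcom (Quotient.mk _ x) (Quotient.mk _ x')
        rw [topCt_ker, botCt_ker, topCt_ker, botCt_ker, modEq_iff_dvd_sub] at h2
        exact h2

lemma inPiRPN_iff (r p : ℕ) {d : SP k} :
    inPiRPN r p n d ↔ (inPi r d ∨ inLambda r p n d) ∧ nBlocks d ≤ n := by
  constructor
  · rintro ⟨(h | h | h), hle⟩
    · exact ⟨Or.inl h, hle⟩
    · exact ⟨Or.inr h, hle⟩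
    · exact absurd hle (not_le.mpr h.1)
  · rintro ⟨(h | h), hle⟩
    · exact ⟨Or.inl h, hle⟩
    · exact ⟨Or.inr (Or.inl h), hle⟩

/-! ### Representative tuples and permutations -/

lemma exists_rep_tuple {d : SP k} (hd : nBlocks d ≤ n) :
    ∃ c : Fin k ⊕ Fin k → Fin n, Setoid.ker c = d := by
  have hfin : Finite (Quotient d) := Quotient.finite d
  let E : Quotient d ≃ Fin (Nat.card (Quotient d)) := Finite.equivFin _
  refine ⟨fun x => Fin.castLE hd (E (Quotient.mk d x)), Setoid.ext fun a b => ?_⟩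
  constructor
  · intro h
    have h1 : E (Quotient.mk d a) = E (Quotient.mk d b) :=
      Fin.castLE_injective hd h
    have h2 : Quotient.mk d a = Quotient.mk d b := E.injective h1
    exact Quotient.eq.mp h2
  · intro h
    have h2 : Quotient.mk d a = Quotient.mk d b := Quotient.sound h
    show Fin.castLE hd (E (Quotient.mk d a)) = Fin.castLE hd (E (Quotient.mk d b))
    rw [h2]

lemma exists_perm_comp {c c' : Fin k ⊕ Fin k → Fin n}
    (h : Setoid.ker c = Setoid.ker c') :
    ∃ π : Equiv.Perm (Fin n), ∀ x, c' x = π (c x) := by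
  let f : Quotient (Setoid.ker c) → Fin n := Quotient.lift c (fun a b hab => hab)
  let f' : Quotient (Setoid.ker c) → Fin n := Quotient.lift c' (fun a b hab => by
    have h1 : (Setoid.ker c).r a b := hab
    rw [h] at h1
    exact h1)
  have hf : Function.Injective f := by
    intro q q'
    refine Quotient.inductionOn₂ q q' ?_
    intro a b hab
    exact Quotient.sound hab
  have hf' : Function.Injective f' := by
    intro q q'
    refine Quotient.inductionOn₂ q q' ?_
    intro a b hab
    apply Quotient.sound
    show (Setoid.ker c).r a b
    rw [h]
    exact hab
  let e : {x // x ∈ Set.range f} ≃ {x // x ∈ Set.range f'} :=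
    (Equiv.ofInjective f hf).symm.trans (Equiv.ofInjective f' hf')
  refine ⟨e.extendSubtype, fun x => ?_⟩
  have hmem : f (Quotient.mk _ x) ∈ Set.range f := ⟨Quotient.mk _ x, rfl⟩
  have h1 : c x = f (Quotient.mk _ x) := rfl
  rw [h1, Equiv.extendSubtype_apply_of_mem e _ hmem]
  show c' x = ↑((Equiv.ofInjective f' hf')
    ((Equiv.ofInjective f hf).symm ⟨f (Quotient.mk _ x), hmem⟩))
  rw [Equiv.ofInjective_symm_apply]
  rfl

instance : Finite (SP k) :=
  Finite.of_injective (fun d : SP k => d.r)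
    (fun d d' h => Setoid.ext fun a b => iff_of_eq (congrFun (congrFun h a) b))

noncomputable instance : Fintype (SP k) := Fintype.ofFinite _

lemma coeX_eq (d : SP k) (c : Fin k ⊕ Fin k → Fin n) :
    coeX n k d c = if Setoid.ker c = d then 1 else 0 := by
  unfold coeX
  by_cases h : Setoid.ker c = d
  · rw [if_pos h, if_pos]
    intro a b
    rw [← h]
    exact Iff.rfl
  · rw [if_neg h, if_neg]
    intro hall
    exact h (Setoid.ext fun a b => (hall a b).symm)

lemma ker_comp_perm (π : Equiv.Perm (Fin n)) (c : Fin k ⊕ Fin k → Fin n) :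
    Setoid.ker (fun x => π (c x)) = Setoid.ker c :=
  Setoid.ext fun a b =>
    ⟨fun h => π.injective h, fun h => congrArg π h⟩

lemma phiX_def (d : SP k) :
    phiX n k d = kernelMap n k (fun o i => coeX n k d (Sum.elim i o)) := rfl

lemma sum_elim_perm (π : Equiv.Perm (Fin n)) (i o : Fin k → Fin n) :
    Sum.elim (fun t => π (i t)) (fun t => π (o t)) = fun x => π (Sum.elim i o x) :=
  funext fun x => by cases x <;> rfl

/-! ### The centralizer as a submodule -/

def centSub (r p n k : ℕ) : Submodule ℂ (TP n k →ₗ[ℂ] TP n k) where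
  carrier := centG r p n k
  add_mem' := by
    intro F F' hF hF' g hg
    rw [LinearMap.add_comp, LinearMap.comp_add, hF g hg, hF' g hg]
  zero_mem' := by
    intro g hg
    rw [LinearMap.zero_comp, LinearMap.comp_zero]
  smul_mem' := by
    intro t F hF g hg
    rw [LinearMap.smul_comp, LinearMap.comp_smul, hF g hg]

lemma phiX_mem_cent {r p : ℕ} (hr : 0 < r) (hn : 0 < n) {d : SP k}
    (hd : inPiRPN r p n d) : phiX n k d ∈ centG r p n k := by
  intro g hg
  obtain ⟨π, a, har, hm, rfl⟩ := hg
  have ha0 : ∀ v, a v ≠ 0 := fun v => a_ne_zero hr (har v)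
  rw [phiX_def, comm_iff]
  intro o i
  show coeX n k d (Sum.elim (fun t => π (i t)) (fun t => π (o t))) * _ = _
  rw [sum_elim_perm, coeX_eq, coeX_eq, ker_comp_perm]
  by_cases h : Setoid.ker (Sum.elim i o) = d
  · rw [if_pos h, one_mul, mul_one]
    have hgood : goodT r p (Sum.elim i o) := by
      rw [good_iff_mem r p, h]
      exact (inPiRPN_iff r p).mp hd |>.1
    exact (prod_ratio a ha0 (Sum.elim i o)).mpr (good_prod hn _ a ha0 har hm hgood)
  · rw [if_neg h, zero_mul, mul_zero]

noncomputable def repc (n k : ℕ) (hn : 0 < n) (d : SP k) : Fin k ⊕ Fin k → Fin n :=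
  if h : nBlocks d ≤ n then Classical.choose (exists_rep_tuple h) else fun _ => ⟨0, hn⟩

lemma repc_spec (hn : 0 < n) {d : SP k} (h : nBlocks d ≤ n) :
    Setoid.ker (repc n k hn d) = d := by
  rw [repc, dif_pos h]
  exact Classical.choose_spec (exists_rep_tuple h)

noncomputable def gammaC (n k : ℕ) (hn : 0 < n)
    (K : (Fin k → Fin n) → (Fin k → Fin n) → ℂ) (d : SP k) : ℂ :=
  K (fun t => repc n k hn d (Sum.inr t)) (fun t => repc n k hn d (Sum.inl t))

lemma span_le_cent (r p n k : ℕ) (hr : 0 < r) (hn : 0 < n) :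
    Submodule.span ℂ {T : TP n k →ₗ[ℂ] TP n k |
        ∃ d : SP k, inPiRPN r p n d ∧ T = phiX n k d} ≤ centSub r p n k := by
  rw [Submodule.span_le]
  rintro T ⟨d, hd, rfl⟩
  exact phiX_mem_cent hr hn hd

lemma cent_le_span (r p n k : ℕ) (hr : 0 < r) (hp : 0 < p) (hn : 0 < n) (hpr : p ∣ r) :
    centSub r p n k ≤ Submodule.span ℂ {T : TP n k →ₗ[ℂ] TP n k |
        ∃ d : SP k, inPiRPN r p n d ∧ T = phiX n k d} := by
  intro F hF
  have hFK : kernelMap n k (matOf F) = F := kernelMap_matOf F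
  set K := matOf F with hKdef
  have hinv : ∀ (π : Equiv.Perm (Fin n)) o i,
      K (fun t => π (o t)) (fun t => π (i t)) = K o i := by
    intro π o i
    have hmem : monoMat n π (fun _ => 1) ∈ GSet r p n :=
      ⟨π, fun _ => 1, fun _ => one_pow r, by simp, rfl⟩
    have hcomm := hF _ hmem
    rw [← hFK] at hcomm
    have h2 := (comm_iff K π (fun _ => 1)).mp hcomm o i
    simpa using h2
  have hvan : ∀ o i, ¬ goodT r p (Sum.elim i o) → K o i = 0 := by
    intro o i hng
    obtain ⟨a, har, hm, hne⟩ := notgood_exists hr hp hpr _ hng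
    have ha0 : ∀ v, a v ≠ 0 := fun v => a_ne_zero hr (har v)
    have hmem : monoMat n 1 a ∈ GSet r p n := ⟨1, a, har, hm, rfl⟩
    have hcomm := hF _ hmem
    rw [← hFK] at hcomm
    have h1 := (comm_iff K 1 a).mp hcomm o i
    simp only [Equiv.Perm.one_apply] at h1
    by_contra hKne
    have heq : (∏ t, a (i t)) = ∏ t, a (o t) :=
      mul_left_cancel₀ hKne (by rw [h1, mul_comm])
    exact hne ((prod_ratio a ha0 (Sum.elim i o)).mp heq)
  have hKsum : K = fun o i => ∑ d ∈ Finset.univ.filter (fun d : SP k => inPiRPN r p n d),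
      gammaC n k hn K d * coeX n k d (Sum.elim i o) := by
    funext o i
    have hcoll : ∀ d ∈ Finset.univ.filter (fun d : SP k => inPiRPN r p n d),
        gammaC n k hn K d * coeX n k d (Sum.elim i o) =
          if d = Setoid.ker (Sum.elim i o) then gammaC n k hn K d else 0 := by
      intro d _
      rw [coeX_eq]
      by_cases h : Setoid.ker (Sum.elim i o) = d
      · rw [if_pos h, if_pos h.symm, mul_one]
      · rw [if_neg h, if_neg (fun hh => h hh.symm), mul_zero]
    rw [Finset.sum_congr rfl hcoll,
      Finset.sum_ite_eq' _ (Setoid.ker (Sum.elim i o)) (gammaC n k hn K)]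
    by_cases hmem : Setoid.ker (Sum.elim i o) ∈
        Finset.univ.filter (fun d : SP k => inPiRPN r p n d)
    · rw [if_pos hmem]
      have he : inPiRPN r p n (Setoid.ker (Sum.elim i o)) :=
        (Finset.mem_filter.mp hmem).2
      have hke : Setoid.ker (repc n k hn (Setoid.ker (Sum.elim i o)))
          = Setoid.ker (Sum.elim i o) := repc_spec hn he.2
      obtain ⟨π, hπ⟩ := exists_perm_comp hke.symm
      have h1 : (fun t => repc n k hn (Setoid.ker (Sum.elim i o)) (Sum.inr t))
          = fun t => π (o t) := funext fun t => hπ (Sum.inr t)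
      have h2 : (fun t => repc n k hn (Setoid.ker (Sum.elim i o)) (Sum.inl t))
          = fun t => π (i t) := funext fun t => hπ (Sum.inl t)
      rw [show gammaC n k hn K (Setoid.ker (Sum.elim i o)) = K
          (fun t => repc n k hn (Setoid.ker (Sum.elim i o)) (Sum.inr t))
          (fun t => repc n k hn (Setoid.ker (Sum.elim i o)) (Sum.inl t)) from rfl,
        h1, h2, hinv]
    · rw [if_neg hmem]
      apply hvan
      intro hgood
      apply hmem
      rw [Finset.mem_filter]
      exact ⟨Finset.mem_univ _, (inPiRPN_iff r p).mpr
        ⟨(good_iff_mem r p _).mp hgood, nBlocks_ker_le _⟩⟩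
  have hFsum : F = ∑ d ∈ Finset.univ.filter (fun d : SP k => inPiRPN r p n d),
      gammaC n k hn K d • phiX n k d := by
    rw [← hFK]
    conv_lhs => rw [hKsum]
    rw [kernelMap_finsum _ (gammaC n k hn K)
      (fun d o i => coeX n k d (Sum.elim i o))]
    exact Finset.sum_congr rfl fun d _ => by rw [phiX_def]
  rw [hFsum]
  apply Submodule.sum_mem
  intro d hd
  apply Submodule.smul_mem
  apply Submodule.subset_span
  exact ⟨d, (Finset.mem_filter.mp hd).2, rfl⟩

end Aux

/-- `{φ_k(x_d) : d ∈ Π_k(r,p,n)}` is a `ℂ`-basis of the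
centralizer algebra `End_{G(r,p,n)}(V^{⊗k})`: it spans it and is linearly
independent. -/
theorem statement2 (r p n k : ℕ) (hr : 0 < r) (hp : 0 < p) (hn : 0 < n) (hk : 0 < k)
    (hpr : p ∣ r) :
    ((Submodule.span ℂ {T : TP n k →ₗ[ℂ] TP n k |
        ∃ d : SP k, inPiRPN r p n d ∧ T = phiX n k d} :
        Submodule ℂ (TP n k →ₗ[ℂ] TP n k)) : Set (TP n k →ₗ[ℂ] TP n k))
      = centG r p n k ∧
    LinearIndependent ℂ fun d : {d : SP k // inPiRPN r p n d} => phiX n k d.1 := by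
  constructor
  · have h1 : Submodule.span ℂ {T : TP n k →ₗ[ℂ] TP n k |
        ∃ d : SP k, inPiRPN r p n d ∧ T = phiX n k d} = centSub r p n k :=
      le_antisymm (span_le_cent r p n k hr hn) (cent_le_span r p n k hr hp hn hpr)
    rw [h1]
    rfl
  · rw [linearIndependent_iff']
    intro s g hsum d₀ hd₀
    obtain ⟨c₀, hc₀⟩ := exists_rep_tuple d₀.2.2
    have heval := congrFun (congrArg (fun (T : TP n k →ₗ[ℂ] TP n k) =>
      T (indK n k (fun t => c₀ (Sum.inl t)))) hsum) (fun t => c₀ (Sum.inr t))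
    simp only [LinearMap.coe_sum, Finset.sum_apply, LinearMap.smul_apply,
      Pi.smul_apply, smul_eq_mul, LinearMap.zero_apply, Pi.zero_apply] at heval
    have hX : ∀ dd : {d : SP k // inPiRPN r p n d},
        phiX n k dd.1 (indK n k (fun t => c₀ (Sum.inl t))) (fun t => c₀ (Sum.inr t))
          = coeX n k dd.1 c₀ := by
      intro dd
      rw [phiX_def, kernelMap_indK]
      congr 1
      exact funext fun x => by cases x <;> rfl
    rw [Finset.sum_congr rfl (fun d _ => by rw [hX d])] at heval
    have hterm : ∀ d ∈ s, g d * coeX n k d.1 c₀ = if d = d₀ then g d else 0 := by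
      intro d _
      rw [coeX_eq, hc₀]
      by_cases h : d = d₀
      · rw [if_pos h, if_pos (by rw [h]), mul_one]
      · rw [if_neg h, if_neg (fun hh => h (Subtype.ext hh.symm)), mul_zero]
    rw [Finset.sum_congr rfl hterm, Finset.sum_ite_eq' s d₀ g, if_pos hd₀] at heval
    exact heval

end Tanabe
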